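/- (Strong monotonicity of the p-Laplacian vector field, case p ≥ 2.) For every p ≥ 2 there exists a constant α_p > 0 such that for all ξ, ξ' ∈ ℝⁿ: ( |ξ|^{p−2}ξ − |ξ'|^{p−2}ξ' ) · (ξ − ξ') ≥ α_p · |ξ − ξ'|^p, where · denotes the Euclidean inner product on ℝⁿ and |·| the Euclidean norm. -/

import Mathlib

/-- **strong monotonicity of the p-Laplacian vector field, `p ≥ 2`.**
For every `p ≥ 2` there is `α_p > 0` such that for all `ξ, ξ' ∈ ℝⁿ`:
`(|ξ|^{p−2}ξ − |ξ'|^{p−2}ξ') · (ξ − ξ') ≥ α_p |ξ − ξ'|^p`. -/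
theorem stmt13 (n : ℕ) (p : ℝ) (hp : 2 ≤ p) :
    ∃ α : ℝ, 0 < α ∧
      ∀ ξ ξ' : EuclideanSpace ℝ (Fin n),
        α * ‖ξ - ξ'‖ ^ p ≤
          (inner ℝ (‖ξ‖ ^ (p - 2) • ξ - ‖ξ'‖ ^ (p - 2) • ξ') (ξ - ξ') : ℝ) := by
  refine ⟨(2:ℝ) ^ (1 - p), Real.rpow_pos_of_pos (by norm_num) _, ?_⟩
  intro a b
  set A := ‖a‖ with hA0
  set B := ‖b‖ with hB0
  set d := ‖a - b‖ with hd0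
  have hA : (0:ℝ) ≤ A := norm_nonneg _
  have hB : (0:ℝ) ≤ B := norm_nonneg _
  have hd : (0:ℝ) ≤ d := norm_nonneg _
  have hp2 : (0:ℝ) ≤ p - 2 := by linarith
  set s := A ^ (p - 2) with hs0
  set r := B ^ (p - 2) with hr0
  have hs : (0:ℝ) ≤ s := Real.rpow_nonneg hA _
  have hr : (0:ℝ) ≤ r := Real.rpow_nonneg hB _
  set t : ℝ := inner ℝ a b with ht0
  -- expand inner product
  have hexp : (inner ℝ (A ^ (p - 2) • a - B ^ (p - 2) • b) (a - b) : ℝ)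
      = s * A ^ 2 + r * B ^ 2 - (s + r) * t := by
    simp only [inner_sub_left, inner_sub_right, real_inner_smul_left,
      real_inner_self_eq_norm_sq]
    have hc : (inner ℝ b a : ℝ) = t := by rw [ht0]; exact (real_inner_comm b a).symm
    rw [hc]
    ring
  rw [hexp]
  have hd2 : d ^ 2 = A ^ 2 + B ^ 2 - 2 * t := by
    rw [hd0, hA0, hB0, ht0, norm_sub_sq_real]; ring
  -- step 1 : (s - r)(A^2 - B^2) ≥ 0
  have h1 : 0 ≤ (s - r) * (A ^ 2 - B ^ 2) := by
    rcases le_total A B with h | h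
    · have hsr : s ≤ r := Real.rpow_le_rpow hA h hp2
      have h2 : A ^ 2 ≤ B ^ 2 := pow_le_pow_left₀ hA h 2
      nlinarith
    · have hsr : r ≤ s := Real.rpow_le_rpow hB h hp2
      have h2 : B ^ 2 ≤ A ^ 2 := pow_le_pow_left₀ hB h 2
      nlinarith
  -- step 2 : d^(p-2) ≤ 2^(p-2) * (s + r)
  have hkey : d ^ (p - 2) ≤ (2:ℝ) ^ (p - 2) * (s + r) := by
    have hdab : d ≤ A + B := norm_sub_le _ _
    rcases le_total A B with h | h
    · have h2 : d ≤ 2 * B := by linarith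
      calc d ^ (p - 2) ≤ (2 * B) ^ (p - 2) := Real.rpow_le_rpow hd h2 hp2
        _ = (2:ℝ) ^ (p - 2) * r := Real.mul_rpow (by norm_num) hB
        _ ≤ (2:ℝ) ^ (p - 2) * (s + r) := by
            have : (0:ℝ) ≤ (2:ℝ) ^ (p - 2) := Real.rpow_nonneg (by norm_num) _
            nlinarith
    · have h2 : d ≤ 2 * A := by linarith
      calc d ^ (p - 2) ≤ (2 * A) ^ (p - 2) := Real.rpow_le_rpow hd h2 hp2
        _ = (2:ℝ) ^ (p - 2) * s := Real.mul_rpow (by norm_num) hA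
        _ ≤ (2:ℝ) ^ (p - 2) * (s + r) := by
            have : (0:ℝ) ≤ (2:ℝ) ^ (p - 2) := Real.rpow_nonneg (by norm_num) _
            nlinarith
  -- d^p = d^(p-2) * d^2
  have hdp : d ^ p = d ^ (p - 2) * d ^ 2 := by
    rw [← Real.rpow_natCast d 2]
    rw [← Real.rpow_add' hd (by norm_num; linarith)]
    norm_num
  have h2pow : (2:ℝ) ^ (1 - p) * (2:ℝ) ^ (p - 2) = 1 / 2 := by
    rw [← Real.rpow_add (by norm_num : (0:ℝ) < 2)]
    have h : (1 - p) + (p - 2) = -1 := by ring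
    rw [h, Real.rpow_neg_one]
    norm_num
  have hαpos : (0:ℝ) < (2:ℝ) ^ (1 - p) := Real.rpow_pos_of_pos (by norm_num) _
  have hdexp : (0:ℝ) ≤ d ^ (p - 2) := Real.rpow_nonneg hd _
  -- chain
  have hstep2 : (2:ℝ) ^ (1 - p) * d ^ p ≤ (1 / 2) * (s + r) * d ^ 2 := by
    rw [hdp]
    have : (2:ℝ) ^ (1 - p) * (d ^ (p - 2) * d ^ 2)
        ≤ (2:ℝ) ^ (1 - p) * (((2:ℝ) ^ (p - 2) * (s + r)) * d ^ 2) := by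
      apply mul_le_mul_of_nonneg_left _ hαpos.le
      exact mul_le_mul_of_nonneg_right hkey (by positivity)
    calc (2:ℝ) ^ (1 - p) * (d ^ (p - 2) * d ^ 2)
        ≤ (2:ℝ) ^ (1 - p) * (((2:ℝ) ^ (p - 2) * (s + r)) * d ^ 2) := this
      _ = ((2:ℝ) ^ (1 - p) * (2:ℝ) ^ (p - 2)) * (s + r) * d ^ 2 := by ring
      _ = (1 / 2) * (s + r) * d ^ 2 := by rw [h2pow]
  nlinarith [hstep2, h1, hd2]
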